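/- The barycenter of the triangle moves along a straight line with constant velocity along any singular trajectory: if u = (u₁,u₂,u₃) solves system (B) on an open interval I and z₁, z₂, z₃ : I → ℂ are differentiable with zᵢ' = uᵢ(z_{i+1} − z_{i+2}) for i = 1,2,3 (indices modulo 3), then the derivative of the barycenter z₀ = (z₁ + z₂ + z₃)/3, namely t ↦ z₀'(t), is a constant function on I; equivalently z₀ is twice differentiable with z₀'' ≡ 0. -/

import Mathlib

theorem barycenter_constant_velocity (a b : ℝ) (u : Fin 3 → ℝ → ℝ) (z : Fin 3 → ℝ → ℂ)
    (hu : ∀ i : Fin 3, ∀ t ∈ Set.Ioo a b,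
      HasDerivAt (u i) (u i t * (u (i + 1) t - u (i + 2) t)) t)
    (hz : ∀ i : Fin 3, ∀ t ∈ Set.Ioo a b,
      HasDerivAt (z i) ((u i t : ℂ) * (z (i + 1) t - z (i + 2) t)) t) :
    ∃ v : ℂ, ∀ t ∈ Set.Ioo a b,
      HasDerivAt (fun s => (z 0 s + z 1 s + z 2 s) / 3) v t := by
  rcases Set.eq_empty_or_nonempty (Set.Ioo a b) with he | ⟨t₀, ht₀⟩
  · exact ⟨0, fun t ht => absurd ht (he ▸ Set.notMem_empty t)⟩
  set w : ℝ → ℂ := fun t =>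
    (u 0 t : ℂ) * (z 1 t - z 2 t) + (u 1 t : ℂ) * (z 2 t - z 0 t)
      + (u 2 t : ℂ) * (z 0 t - z 1 t) with hwdef
  have h12 : (1 : Fin 3) + 1 = 2 := by decide
  have h20 : (1 : Fin 3) + 2 = 0 := by decide
  have h21 : (2 : Fin 3) + 1 = 0 := by decide
  have h22 : (2 : Fin 3) + 2 = 1 := by decide
  have hw : ∀ t ∈ Set.Ioo a b, HasDerivAt w 0 t := by
    intro t ht
    have d0 := ((hu 0 t ht).ofReal_comp.mul ((hz 1 t ht).sub (hz 2 t ht)))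
    have d1 := ((hu 1 t ht).ofReal_comp.mul ((hz 2 t ht).sub (hz 0 t ht)))
    have d2 := ((hu 2 t ht).ofReal_comp.mul ((hz 0 t ht).sub (hz 1 t ht)))
    have := (d0.add d1).add d2
    simp only [h12, h20, h21, h22, zero_add, Pi.mul_apply, Pi.sub_apply, Pi.add_apply] at this
    convert this using 1
    case e'_4 => rfl
    case e'_8 => rfl
    push_cast
    ring
  have hbar : ∀ t ∈ Set.Ioo a b,
      HasDerivAt (fun s => (z 0 s + z 1 s + z 2 s) / 3) (w t / 3) t := by
    intro t ht
    have := (((hz 0 t ht).add (hz 1 t ht)).add (hz 2 t ht)).div_const (3 : ℂ)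
    simp only [h12, h20, h21, h22, zero_add, Pi.add_apply] at this ⊢
    convert this using 1
  refine ⟨w t₀ / 3, fun t ht => ?_⟩
  have hconst : w t = w t₀ := by
    have hdiff : DifferentiableOn ℝ w (Set.Ioo a b) := fun x hx =>
      ((hw x hx).differentiableAt).differentiableWithinAt
    refine (convex_Ioo a b).is_const_of_fderivWithin_eq_zero hdiff (fun x hx => ?_) ht ht₀
    rw [fderivWithin_of_isOpen isOpen_Ioo hx, (hw x hx).hasFDerivAt.fderiv]
    ext ; simp
  rw [← hconst]
  exact hbar t ht
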